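/- Let k₀ > 0 and z ∈ ℂ with Im z ≠ 0, and let h = -∂² + 2k₀²/cos²(k₀(x - z)). The functions ψ(x) = 1/cos(k₀(x - z)) and φ(x) = (1/(2k₀²))·cos(k₀(x - z)) satisfy h ψ = k₀² ψ and (h - k₀²)φ = ψ on ℝ, so φ is an associated function of first order for h at the spectral value k₀². -/

import Mathlib

/-- The complex singular Hamiltonian `h = -∂² + 2k₀²/cos²(k₀(x - z))`. -/
noncomputable def hTan (k₀ : ℝ) (z : ℂ) (f : ℝ → ℂ) : ℝ → ℂ :=
  fun x => -(deriv (deriv f) x)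
    + 2 * (k₀ : ℂ) ^ 2 / Complex.cos ((k₀ : ℂ) * ((x : ℂ) - z)) ^ 2 * f x

lemma cos_ne_zero_of_im (k₀ : ℝ) (z : ℂ) (hk₀ : 0 < k₀) (hz : z.im ≠ 0) (x : ℝ) :
    Complex.cos ((k₀ : ℂ) * ((x : ℂ) - z)) ≠ 0 := by
  intro h
  rw [Complex.cos_eq_zero_iff] at h
  obtain ⟨k, hk⟩ := h
  have him := congrArg Complex.im hk
  simp [Complex.mul_im, Complex.sub_im, Complex.div_im, Complex.add_im,
    Complex.ofReal_im, Complex.mul_re, Complex.add_re] at him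
  rcases him with h1 | h2
  · exact hk₀.ne' h1
  · exact hz h2

lemma hasDerivAt_cos_aff (k₀ : ℝ) (z : ℂ) (w : ℂ) :
    HasDerivAt (fun w : ℂ => Complex.cos ((k₀ : ℂ) * (w - z)))
      (-Complex.sin ((k₀ : ℂ) * (w - z)) * k₀) w := by
  have h : HasDerivAt (fun w : ℂ => (k₀ : ℂ) * (w - z)) (k₀ : ℂ) w := by
    simpa using ((hasDerivAt_id w).sub_const z).const_mul ((k₀ : ℂ))
  exact (Complex.hasDerivAt_cos _).comp w h

lemma hasDerivAt_sin_aff (k₀ : ℝ) (z : ℂ) (w : ℂ) :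
    HasDerivAt (fun w : ℂ => Complex.sin ((k₀ : ℂ) * (w - z)))
      (Complex.cos ((k₀ : ℂ) * (w - z)) * k₀) w := by
  have h : HasDerivAt (fun w : ℂ => (k₀ : ℂ) * (w - z)) (k₀ : ℂ) w := by
    simpa using ((hasDerivAt_id w).sub_const z).const_mul ((k₀ : ℂ))
  exact (Complex.hasDerivAt_sin _).comp w h

/-- `ψ = 1/cos(k₀(x-z))` is an eigenfunction of `h` at `k₀²`, and
`φ = cos(k₀(x-z))/(2k₀²)` is an associated function of first order:
`(h - k₀²) φ = ψ`. -/
theorem stmt_11 (k₀ : ℝ) (z : ℂ) (hk₀ : 0 < k₀) (hz : z.im ≠ 0) :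
    (∀ x : ℝ, hTan k₀ z (fun y => 1 / Complex.cos ((k₀ : ℂ) * ((y : ℂ) - z))) x
      = (k₀ : ℂ) ^ 2 * (1 / Complex.cos ((k₀ : ℂ) * ((x : ℂ) - z)))) ∧
    (∀ x : ℝ, hTan k₀ z (fun y => (1 / (2 * (k₀ : ℂ) ^ 2)) *
          Complex.cos ((k₀ : ℂ) * ((y : ℂ) - z))) x
        - (k₀ : ℂ) ^ 2 * ((1 / (2 * (k₀ : ℂ) ^ 2)) *
          Complex.cos ((k₀ : ℂ) * ((x : ℂ) - z)))
      = 1 / Complex.cos ((k₀ : ℂ) * ((x : ℂ) - z))) := by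
  have hne := cos_ne_zero_of_im k₀ z hk₀ hz
  have hk : (k₀ : ℂ) ≠ 0 := by exact_mod_cast hk₀.ne'
  constructor
  · -- ψ part
    intro x
    set c : ℝ → ℂ := fun x => Complex.cos ((k₀ : ℂ) * ((x : ℂ) - z)) with hc
    set s : ℝ → ℂ := fun x => Complex.sin ((k₀ : ℂ) * ((x : ℂ) - z)) with hs
    have hd1 : deriv (fun y : ℝ => 1 / Complex.cos ((k₀ : ℂ) * ((y : ℂ) - z)))
        = fun y : ℝ => s y * k₀ / (c y) ^ 2 := by
      funext y
      have h1 : HasDerivAt (fun y : ℝ => (Complex.cos ((k₀ : ℂ) * ((y : ℂ) - z)))⁻¹)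
          (-(-Complex.sin ((k₀ : ℂ) * ((y : ℂ) - z)) * k₀)
            / (Complex.cos ((k₀ : ℂ) * ((y : ℂ) - z))) ^ 2) y :=
        ((hasDerivAt_cos_aff k₀ z (y : ℂ)).inv (hne y)).comp_ofReal
      have h2 : (fun y : ℝ => 1 / Complex.cos ((k₀ : ℂ) * ((y : ℂ) - z)))
          = fun y : ℝ => (Complex.cos ((k₀ : ℂ) * ((y : ℂ) - z)))⁻¹ := by
        funext t; rw [one_div]
      rw [h2, h1.deriv]
      ring
    have hgp : HasDerivAt (fun y : ℝ => (c y) ^ 2) (2 * c x * (-s x * k₀)) x := by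
      have h := (((hasDerivAt_cos_aff k₀ z (x : ℂ)).pow 2).comp_ofReal :
        HasDerivAt (fun y : ℝ => Complex.cos ((k₀ : ℂ) * ((y : ℂ) - z)) ^ 2) _ x)
      convert h using 1
      · rfl
      · norm_num
        ring
    have h2 : HasDerivAt (fun y : ℝ => s y * k₀ / (c y) ^ 2)
        ((c x * k₀ * k₀ * (c x) ^ 2 - s x * k₀ * (2 * c x * (-s x * k₀)))
          / ((c x) ^ 2) ^ 2) x :=
      HasDerivAt.div
        (((hasDerivAt_sin_aff k₀ z (x : ℂ)).comp_ofReal).mul_const _)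
        hgp (pow_ne_zero 2 (hne x))
    have hd2 : deriv (deriv (fun y : ℝ => 1 / Complex.cos ((k₀ : ℂ) * ((y : ℂ) - z)))) x
        = (c x * k₀ * k₀ * (c x) ^ 2 - s x * k₀ * (2 * c x * (-s x * k₀)))
          / ((c x) ^ 2) ^ 2 := by
      rw [hd1]; exact h2.deriv
    show -(deriv (deriv _) x) + 2 * (k₀ : ℂ) ^ 2 / (c x) ^ 2 * (1 / c x)
      = (k₀ : ℂ) ^ 2 * (1 / c x)
    rw [hd2]
    have hsc : s x ^ 2 + c x ^ 2 = 1 := Complex.sin_sq_add_cos_sq _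
    have hcx : c x ≠ 0 := hne x
    field_simp [hcx, hk]
    linear_combination (-2) * hsc
  · -- φ part
    intro x
    set C : ℂ := 1 / (2 * (k₀ : ℂ) ^ 2) with hC
    set c : ℝ → ℂ := fun x => Complex.cos ((k₀ : ℂ) * ((x : ℂ) - z)) with hc
    set s : ℝ → ℂ := fun x => Complex.sin ((k₀ : ℂ) * ((x : ℂ) - z)) with hs
    have hd1 : deriv (fun y : ℝ => C * Complex.cos ((k₀ : ℂ) * ((y : ℂ) - z)))
        = fun y : ℝ => C * (-s y * k₀) := by
      funext y
      exact (((hasDerivAt_cos_aff k₀ z (y : ℂ)).comp_ofReal).const_mul C).deriv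
    have h2 : HasDerivAt (fun y : ℝ => C * (-s y * k₀)) (C * (-(c x * k₀) * k₀)) x :=
      ((((hasDerivAt_sin_aff k₀ z (x : ℂ)).comp_ofReal).neg).mul_const k₀).const_mul C
    have hd2 : deriv (deriv (fun y : ℝ => C * Complex.cos ((k₀ : ℂ) * ((y : ℂ) - z)))) x
        = C * (-(c x * k₀) * k₀) := by
      rw [hd1]; exact h2.deriv
    show -(deriv (deriv _) x) + 2 * (k₀ : ℂ) ^ 2 / (c x) ^ 2 * (C * c x)
        - (k₀ : ℂ) ^ 2 * (C * c x) = 1 / c x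
    rw [hd2, hC]
    have hcx : c x ≠ 0 := hne x
    field_simp [hcx, hk]
    ring
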